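/- If a formula φ ∈ HML_srbb distinguishes a process p from a set of processes Q, then expr(φ) ∈ Win_a([p,Q]_a) in the weak spectroscopy energy game G△. -/

import Mathlib

open Classical

noncomputable section

namespace Spectroscopy

/-! ### Energies and declining energy games -/

/-- Energies: 8-dimensional vectors over `ℕ ∪ {∞}`, ordered componentwise. -/
abbrev Energy : Type := Fin 8 → ℕ∞

/-- The `i`-th unit vector. -/
def unitE (i : Fin 8) : Energy := fun k => if k = i then 1 else 0

/-- The vector with value `v` at position `i` and `0` elsewhere. -/
def onlyAt (i : Fin 8) (v : ℕ∞) : Energy := fun k => if k = i then v else 0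

/-- Components of energy updates: `-1`, `0`, or minimum selection `min_D`.
For the component at position `k`, `minWith D` selects the minimum over the
positions `{k} ∪ D`, so the requirement `k ∈ D` of the paper holds by
construction. -/
inductive UpdComp : Type
  | decr : UpdComp
  | zero : UpdComp
  | minWith (D : Finset (Fin 8)) : UpdComp
deriving DecidableEq

/-- Energy updates. -/
abbrev Update : Type := Fin 8 → UpdComp

/-- Partial application of an update to an energy (`none` when a component
would become negative). -/
def upd (e : Energy) (u : Update) : Option Energy :=
  if ∀ k, u k = UpdComp.decr → e k ≠ 0 then
    some (fun k =>
      match u k with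
      | UpdComp.decr => e k - 1
      | UpdComp.zero => e k
      | UpdComp.minWith D => (insert k D).inf e)
  else none

/-- A declining energy game: positions, a defender predicate (attacker
positions are the non-defender ones), and moves labeled with updates. -/
structure EGame (Pos : Type) where
  defender : Pos → Prop
  move : Pos → Update → Pos → Prop

/-- Attacker winning budgets `Win_a`: at an attacker position some move must
lead to an attacker-won position under the updated energy; at a defender
position every move must (be defined and) lead to an attacker-won position. -/
inductive EGame.Win {Pos : Type} (G : EGame Pos) : Pos → Energy → Prop
  | attack {g : Pos} {u : Update} {g' : Pos} {e e' : Energy} :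
      ¬ G.defender g → G.move g u g' → upd e u = some e' → G.Win g' e' →
      G.Win g e
  | defend {g : Pos} {e : Energy} :
      G.defender g →
      (∀ u g', G.move g u g' → upd e u ≠ none) →
      (∀ u g' e', G.move g u g' → upd e u = some e' → G.Win g' e') →
      G.Win g e

/-! ### Labeled transition systems with silent steps -/

section LTS

variable {Proc Act : Type}

/-- Weak internal steps `↠`: reflexive-transitive closure of `τ`-steps. -/
def Star (Tr : Proc → Act → Proc → Prop) (τ : Act) : Proc → Proc → Prop :=
  Relation.ReflTransGen fun p p' => Tr p τ p'

/-- A process is stable if it has no `τ`-step. -/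
def Stable (Tr : Proc → Act → Proc → Prop) (τ : Act) (p : Proc) : Prop :=
  ∀ p', ¬ Tr p τ p'

/-- Optional step `p →(α) p'`: a real `α`-step, or `α = τ` and `p = p'`. -/
def OptStep (Tr : Proc → Act → Proc → Prop) (τ : Act) (p : Proc) (α : Act) (p' : Proc) : Prop :=
  Tr p α p' ∨ (α = τ ∧ p = p')

/-- Lift of `→a` to sets. -/
def SetStep (Tr : Proc → Act → Proc → Prop) (Q : Set Proc) (a : Act) (Q' : Set Proc) : Prop :=
  Q' = {q' | ∃ q ∈ Q, Tr q a q'}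

/-- Lift of `↠` to sets. -/
def SetStar (Tr : Proc → Act → Proc → Prop) (τ : Act) (Q Q' : Set Proc) : Prop :=
  Q' = {q' | ∃ q ∈ Q, Star Tr τ q q'}

/-- Lift of `→(α)` to sets. -/
def SetOpt (Tr : Proc → Act → Proc → Prop) (τ : Act) (Q : Set Proc) (α : Act)
    (Q' : Set Proc) : Prop :=
  Q' = {q' | ∃ q ∈ Q, OptStep Tr τ q α q'}

end LTS

/-! ### The logic HML_srbb -/

mutual
/-- Formulas `φ` of HML_srbb: `⟨ε⟩χ` or immediate conjunctions `⋀Ψ`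
(conjunctions are indexed by an arbitrary type). `⊤` is the empty conjunction. -/
inductive Formula (Act : Type) (τ : Act) : Type 1
  | delayed : DFormula Act τ → Formula Act τ
  | conj : (I : Type) → (I → Conjunct Act τ) → Formula Act τ

/-- Delayed formulas `χ`: observations `⟨a⟩φ` (with `a ≠ τ`), standard
conjunctions `⋀Ψ`, stable conjunctions `⋀({¬⟨τ⟩⊤} ∪ Ψ)`, and branching
conjunctions `⋀({(α)φ} ∪ Ψ)`. -/
inductive DFormula (Act : Type) (τ : Act) : Type 1
  | obs : (a : Act) → a ≠ τ → Formula Act τ → DFormula Act τ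
  | conj : (I : Type) → (I → Conjunct Act τ) → DFormula Act τ
  | stableConj : (I : Type) → (I → Conjunct Act τ) → DFormula Act τ
  | branchConj : (α : Act) → Formula Act τ → (I : Type) → (I → Conjunct Act τ) → DFormula Act τ

/-- Conjuncts `ψ`: positive `⟨ε⟩χ` or negative `¬⟨ε⟩χ`. -/
inductive Conjunct (Act : Type) (τ : Act) : Type 1
  | pos : DFormula Act τ → Conjunct Act τ
  | neg : DFormula Act τ → Conjunct Act τ
end

section Semantics

variable {Proc Act : Type}

mutual
/-- Semantics `⟦φ⟧`. -/
def Sat (Tr : Proc → Act → Proc → Prop) (τ : Act) (p : Proc) : Formula Act τ → Prop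
  | .delayed χ => ∃ p', Star Tr τ p p' ∧ SatD Tr τ p' χ
  | .conj _ ps => ∀ i, SatC Tr τ p (ps i)

/-- Semantics `⟦χ⟧^ε` of delayed formulas. -/
def SatD (Tr : Proc → Act → Proc → Prop) (τ : Act) (p : Proc) : DFormula Act τ → Prop
  | .obs a _ φ => ∃ p', Tr p a p' ∧ Sat Tr τ p' φ
  | .conj _ ps => ∀ i, SatC Tr τ p (ps i)
  | .stableConj _ ps => Stable Tr τ p ∧ ∀ i, SatC Tr τ p (ps i)
  | .branchConj α φ _ ps =>
      (∃ p', OptStep Tr τ p α p' ∧ Sat Tr τ p' φ) ∧ ∀ i, SatC Tr τ p (ps i)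

/-- Semantics `⟦ψ⟧^∧` of conjuncts. -/
def SatC (Tr : Proc → Act → Proc → Prop) (τ : Act) (p : Proc) : Conjunct Act τ → Prop
  | .pos χ => ∃ p', Star Tr τ p p' ∧ SatD Tr τ p' χ
  | .neg χ => ¬ ∃ p', Star Tr τ p p' ∧ SatD Tr τ p' χ
end

/-- `φ` distinguishes `p` from the set `Q`. -/
def Distinguishes (Tr : Proc → Act → Proc → Prop) (τ : Act) (φ : Formula Act τ)
    (p : Proc) (Q : Set Proc) : Prop :=
  Sat Tr τ p φ ∧ ∀ q ∈ Q, ¬ Sat Tr τ q φ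

/-- The delayed formula `χ` distinguishes `p` from the set `Q` w.r.t. `⟦·⟧^ε`. -/
def DistinguishesD (Tr : Proc → Act → Proc → Prop) (τ : Act) (χ : DFormula Act τ)
    (p : Proc) (Q : Set Proc) : Prop :=
  SatD Tr τ p χ ∧ ∀ q ∈ Q, ¬ SatD Tr τ q χ

/-- The conjunct `ψ` distinguishes `p` from `q` w.r.t. `⟦·⟧^∧`. -/
def DistinguishesC (Tr : Proc → Act → Proc → Prop) (τ : Act) (ψ : Conjunct Act τ)
    (p q : Proc) : Prop :=
  SatC Tr τ p ψ ∧ ¬ SatC Tr τ q ψ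

/-- Stability-respecting branching bisimulations: symmetric relations with the
branching-bisimulation transfer property and the stability-respecting
property. -/
def IsSRBBisim (Tr : Proc → Act → Proc → Prop) (τ : Act) (R : Proc → Proc → Prop) : Prop :=
  Symmetric R ∧
  (∀ p q, R p q → ∀ α p', Tr p α p' →
    (α = τ ∧ R p' q) ∨
      ∃ q' q'', Star Tr τ q q' ∧ Tr q' α q'' ∧ R p q' ∧ R p' q'') ∧
  (∀ p q, R p q → Stable Tr τ p →
    ∃ q', Star Tr τ q q' ∧ Stable Tr τ q' ∧ R p q')

end Semantics

/-! ### Expressiveness prices -/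

section Expr

variable {Act : Type} {τ : Act}

mutual
/-- Expressiveness price `expr` of formulas. -/
def exprF : Formula Act τ → Energy
  | .delayed χ => exprE χ
  | .conj I ps => ⨆ _ : Nonempty I, ((unitE 4 + unitE 2) + ⨆ i, exprC (ps i))

/-- Expressiveness price `expr^ε` of delayed formulas. -/
def exprE : DFormula Act τ → Energy
  | .obs _ _ φ => unitE 0 + exprF φ
  | .conj I ps => ⨆ _ : Nonempty I, (unitE 2 + ⨆ i, exprC (ps i))
  | .stableConj _ ps => unitE 3 + ⨆ i, exprC (ps i)
  | .branchConj _ φ _ ps =>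
      (unitE 1 + unitE 2) +
        (((unitE 0 + exprF φ) ⊔ onlyAt 5 (1 + exprF φ 0)) ⊔ ⨆ i, exprC (ps i))

/-- Expressiveness price `expr^∧` of conjuncts. -/
def exprC : Conjunct Act τ → Energy
  | .pos χ => exprE χ ⊔ onlyAt 5 (exprE χ 0)
  | .neg χ => (unitE 7 + exprE χ) ⊔ onlyAt 6 (exprE χ 0)
end

end Expr

/-! ### The weak spectroscopy energy game -/

/-- Positions of the weak spectroscopy game. -/
inductive GPos (Proc Act : Type) : Type
  | att (p : Proc) (Q : Set Proc)                                 -- `[p,Q]_a`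
  | attD (p : Proc) (Q : Set Proc)                                -- `[p,Q]^ε_a`
  | attC (p q : Proc)                                             -- `[p,q]^∧_a`
  | attB (p : Proc) (Q : Set Proc)                                -- `[p,Q]^η_a`
  | defC (p : Proc) (Q : Set Proc)                                -- `(p,Q)_d`
  | defS (p : Proc) (Q : Set Proc)                                -- `(p,Q)^s_d`
  | defB (p : Proc) (α : Act) (p' : Proc) (Q Qa : Set Proc)       -- `(p,α,p',Q,Qa)^η_d`

/-- The zero update. -/
def zeroU : Update := fun _ => UpdComp.zero

/-- The update `-ê_i`. -/
def decU (i : Fin 8) : Update := fun k => if k = i then UpdComp.decr else UpdComp.zero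

/-- The update `(min_{1,6},0,0,0,0,0,0,0)`. -/
def minU16 : Update := fun k => if k = 0 then UpdComp.minWith {5} else UpdComp.zero

/-- The update `(min_{1,7},0,0,0,0,0,0,-1)`. -/
def minU17dec8 : Update := fun k =>
  if k = 0 then UpdComp.minWith {6} else if k = 7 then UpdComp.decr else UpdComp.zero

/-- The update `(0,-1,-1,0,0,0,0,0)`. -/
def dec23 : Update := fun k => if k = 1 ∨ k = 2 then UpdComp.decr else UpdComp.zero

/-- The update `(min_{1,6},-1,-1,0,0,0,0,0)`. -/
def minU16dec23 : Update := fun k =>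
  if k = 0 then UpdComp.minWith {5}
  else if k = 1 ∨ k = 2 then UpdComp.decr else UpdComp.zero

section Game

variable {Proc Act : Type}

/-- Moves of the weak spectroscopy game. -/
inductive GMove (Tr : Proc → Act → Proc → Prop) (τ : Act) :
    GPos Proc Act → Update → GPos Proc Act → Prop
  | delay {p : Proc} {Q Q' : Set Proc} :
      SetStar Tr τ Q Q' →
      GMove Tr τ (.att p Q) zeroU (.attD p Q')
  | procrastination {p p' : Proc} {Q : Set Proc} :
      Tr p τ p' → p ≠ p' →
      GMove Tr τ (.attD p Q) zeroU (.attD p' Q)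
  | observation {p p' : Proc} {a : Act} {Q Q' : Set Proc} :
      Tr p a p' → a ≠ τ → SetStep Tr Q a Q' →
      GMove Tr τ (.attD p Q) (decU 0) (.att p' Q')
  | finishing {p : Proc} :
      GMove Tr τ (.att p ∅) zeroU (.defC p ∅)
  | immediateConj {p : Proc} {Q : Set Proc} :
      Q ≠ ∅ →
      GMove Tr τ (.att p Q) (decU 4) (.defC p Q)
  | lateConj {p : Proc} {Q : Set Proc} :
      GMove Tr τ (.attD p Q) zeroU (.defC p Q)
  | conjAnswer {p q : Proc} {Q : Set Proc} :
      q ∈ Q →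
      GMove Tr τ (.defC p Q) (decU 2) (.attC p q)
  | posConjunct {p q : Proc} {Q : Set Proc} :
      SetStar Tr τ {q} Q →
      GMove Tr τ (.attC p q) minU16 (.attD p Q)
  | negConjunct {p q : Proc} {Q : Set Proc} :
      SetStar Tr τ {p} Q → p ≠ q →
      GMove Tr τ (.attC p q) minU17dec8 (.attD q Q)
  | stableConj {p : Proc} {Q : Set Proc} :
      Stable Tr τ p →
      GMove Tr τ (.attD p Q) zeroU (.defS p {q ∈ Q | Stable Tr τ q})
  | conjStableAnswer {p q : Proc} {Q : Set Proc} :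
      q ∈ Q →
      GMove Tr τ (.defS p Q) (decU 3) (.attC p q)
  | stableFinishing {p : Proc} :
      GMove Tr τ (.defS p ∅) (decU 3) (.defC p ∅)
  | branchConj {p p' : Proc} {α : Act} {Q Qa : Set Proc} :
      OptStep Tr τ p α p' → Qa ⊆ Q →
      GMove Tr τ (.attD p Q) zeroU (.defB p α p' (Q \ Qa) Qa)
  | branchAnswer {p p' q : Proc} {α : Act} {Q Qa : Set Proc} :
      q ∈ Q →
      GMove Tr τ (.defB p α p' Q Qa) dec23 (.attC p q)
  | branchObservation {p p' : Proc} {α : Act} {Q Qa Q' : Set Proc} :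
      SetOpt Tr τ Qa α Q' →
      GMove Tr τ (.defB p α p' Q Qa) minU16dec23 (.attB p' Q')
  | branchAccounting {p : Proc} {Q : Set Proc} :
      GMove Tr τ (.attB p Q) (decU 0) (.att p Q)

/-- Defender positions of the weak spectroscopy game. -/
def isDefender : GPos Proc Act → Prop
  | .defC _ _ => True
  | .defS _ _ => True
  | .defB _ _ _ _ _ => True
  | _ => False

/-- The weak spectroscopy energy game `G△`. -/
def specGame (Tr : Proc → Act → Proc → Prop) (τ : Act) : EGame (GPos Proc Act) where
  defender := isDefender
  move := GMove Tr τ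

end Game

/-! ### Strategy formulas -/

section Strat

variable {Proc Act : Type}

mutual
/-- Attacker strategy formulas (formula sort). -/
inductive StratF (Tr : Proc → Act → Proc → Prop) (τ : Act) :
    GPos Proc Act → Energy → Formula Act τ → Prop
  | delay {p : Proc} {Q Q' : Set Proc} {u : Update} {e e' : Energy} {χ : DFormula Act τ} :
      GMove Tr τ (.att p Q) u (.attD p Q') →
      upd e u = some e' →
      (specGame Tr τ).Win (.attD p Q') e' →
      StratD Tr τ (.attD p Q') e' χ →
      StratF Tr τ (.att p Q) e (.delayed χ)
  | immediateConj {p : Proc} {Q : Set Proc} {u : Update} {e e' : Energy}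
      {I : Type} {ps : I → Conjunct Act τ} :
      GMove Tr τ (.att p Q) u (.defC p Q) →
      upd e u = some e' →
      (specGame Tr τ).Win (.defC p Q) e' →
      StratD Tr τ (.defC p Q) e' (.conj I ps) →
      StratF Tr τ (.att p Q) e (.conj I ps)

/-- Attacker strategy formulas (delayed-formula sort). -/
inductive StratD (Tr : Proc → Act → Proc → Prop) (τ : Act) :
    GPos Proc Act → Energy → DFormula Act τ → Prop
  | procrastination {p p' : Proc} {Q : Set Proc} {u : Update} {e e' : Energy}
      {χ : DFormula Act τ} :
      GMove Tr τ (.attD p Q) u (.attD p' Q) →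
      upd e u = some e' →
      (specGame Tr τ).Win (.attD p' Q) e' →
      StratD Tr τ (.attD p' Q) e' χ →
      StratD Tr τ (.attD p Q) e χ
  | observation {p p' : Proc} {a : Act} {Q Q' : Set Proc} {u : Update} {e e' : Energy}
      {φ : Formula Act τ} (ha : a ≠ τ) :
      GMove Tr τ (.attD p Q) u (.att p' Q') →
      Tr p a p' → SetStep Tr Q a Q' →
      upd e u = some e' →
      (specGame Tr τ).Win (.att p' Q') e' →
      StratF Tr τ (.att p' Q') e' φ →
      StratD Tr τ (.attD p Q) e (.obs a ha φ)
  | lateConj {p : Proc} {Q : Set Proc} {u : Update} {e e' : Energy} {χ : DFormula Act τ} :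
      GMove Tr τ (.attD p Q) u (.defC p Q) →
      upd e u = some e' →
      (specGame Tr τ).Win (.defC p Q) e' →
      StratD Tr τ (.defC p Q) e' χ →
      StratD Tr τ (.attD p Q) e χ
  | stable {p : Proc} {Q Q' : Set Proc} {u : Update} {e e' : Energy} {χ : DFormula Act τ} :
      GMove Tr τ (.attD p Q) u (.defS p Q') →
      upd e u = some e' →
      (specGame Tr τ).Win (.defS p Q') e' →
      StratD Tr τ (.defS p Q') e' χ →
      StratD Tr τ (.attD p Q) e χ
  | branch {p p' : Proc} {α : Act} {Q Q' Qa : Set Proc} {u : Update} {e e' : Energy}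
      {χ : DFormula Act τ} :
      GMove Tr τ (.attD p Q) u (.defB p α p' Q' Qa) →
      upd e u = some e' →
      (specGame Tr τ).Win (.defB p α p' Q' Qa) e' →
      StratD Tr τ (.defB p α p' Q' Qa) e' χ →
      StratD Tr τ (.attD p Q) e χ
  | conj {p : Proc} {Q : Set Proc} {e : Energy}
      (us : {q // q ∈ Q} → Update) (es : {q // q ∈ Q} → Energy)
      (ψs : {q // q ∈ Q} → Conjunct Act τ) :
      (∀ qq : {q // q ∈ Q}, GMove Tr τ (.defC p Q) (us qq) (.attC p qq.1)) →
      (∀ qq : {q // q ∈ Q}, upd e (us qq) = some (es qq)) →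
      (∀ qq : {q // q ∈ Q}, (specGame Tr τ).Win (.attC p qq.1) (es qq)) →
      (∀ qq : {q // q ∈ Q}, StratC Tr τ (.attC p qq.1) (es qq) (ψs qq)) →
      StratD Tr τ (.defC p Q) e (.conj {q // q ∈ Q} ψs)
  | stableConj {p : Proc} {Q : Set Proc} {e : Energy}
      (hne : Q.Nonempty)
      (us : {q // q ∈ Q} → Update) (es : {q // q ∈ Q} → Energy)
      (ψs : {q // q ∈ Q} → Conjunct Act τ) :
      (∀ qq : {q // q ∈ Q}, GMove Tr τ (.defS p Q) (us qq) (.attC p qq.1)) →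
      (∀ qq : {q // q ∈ Q}, upd e (us qq) = some (es qq)) →
      (∀ qq : {q // q ∈ Q}, (specGame Tr τ).Win (.attC p qq.1) (es qq)) →
      (∀ qq : {q // q ∈ Q}, StratC Tr τ (.attC p qq.1) (es qq) (ψs qq)) →
      StratD Tr τ (.defS p Q) e (.stableConj {q // q ∈ Q} ψs)
  | stableFinish {p : Proc} {u : Update} {e e' : Energy} :
      GMove Tr τ (.defS p ∅) u (.defC p ∅) →
      upd e u = some e' →
      (specGame Tr τ).Win (.defC p (∅ : Set Proc)) e' →
      StratD Tr τ (.defS p ∅) e (.stableConj Empty fun x => x.elim)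
  | branchConj {p p' : Proc} {α : Act} {Q Qa Q' : Set Proc} {ua ua' : Update}
      {e e1 ea : Energy} {φa : Formula Act τ}
      (us : {q // q ∈ Q} → Update) (es : {q // q ∈ Q} → Energy)
      (ψs : {q // q ∈ Q} → Conjunct Act τ) :
      GMove Tr τ (.defB p α p' Q Qa) ua (.attB p' Q') →
      GMove Tr τ (.attB p' Q') ua' (.att p' Q') →
      upd e ua = some e1 →
      upd e1 ua' = some ea →
      (specGame Tr τ).Win (.att p' Q') ea →
      StratF Tr τ (.att p' Q') ea φa →
      (∀ qq : {q // q ∈ Q}, GMove Tr τ (.defB p α p' Q Qa) (us qq) (.attC p qq.1)) →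
      (∀ qq : {q // q ∈ Q}, upd e (us qq) = some (es qq)) →
      (∀ qq : {q // q ∈ Q}, (specGame Tr τ).Win (.attC p qq.1) (es qq)) →
      (∀ qq : {q // q ∈ Q}, StratC Tr τ (.attC p qq.1) (es qq) (ψs qq)) →
      StratD Tr τ (.defB p α p' Q Qa) e (.branchConj α φa {q // q ∈ Q} ψs)

/-- Attacker strategy formulas (conjunct sort). -/
inductive StratC (Tr : Proc → Act → Proc → Prop) (τ : Act) :
    GPos Proc Act → Energy → Conjunct Act τ → Prop
  | pos {p q : Proc} {Q' : Set Proc} {u : Update} {e e' : Energy} {χ : DFormula Act τ} :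
      GMove Tr τ (.attC p q) u (.attD p Q') →
      upd e u = some e' →
      (specGame Tr τ).Win (.attD p Q') e' →
      StratD Tr τ (.attD p Q') e' χ →
      StratC Tr τ (.attC p q) e (.pos χ)
  | neg {p q : Proc} {P' : Set Proc} {u : Update} {e e' : Energy} {χ : DFormula Act τ} :
      GMove Tr τ (.attC p q) u (.attD q P') →
      upd e u = some e' →
      (specGame Tr τ).Win (.attD q P') e' →
      StratD Tr τ (.attD q P') e' χ →
      StratC Tr τ (.attC p q) e (.neg χ)
end

end Strat


/-! ### Auxiliary development -/

section AuxEnergy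

lemma one_add_sub_one (x : ℕ∞) : (1 + x) - 1 = x := by
  cases x with
  | top => rfl
  | coe n => exact_mod_cast by omega

/-- Total update-result function. -/
def updRes (e : Energy) (u : Update) : Energy := fun k =>
  match u k with
  | UpdComp.decr => e k - 1
  | UpdComp.zero => e k
  | UpdComp.minWith D => (insert k D).inf e

lemma upd_eq_some {e : Energy} {u : Update} (h : ∀ k, u k = UpdComp.decr → e k ≠ 0) :
    upd e u = some (updRes e u) := by
  rw [upd, if_pos h]; rfl

lemma upd_some_elim {e : Energy} {u : Update} {d : Energy} (h : upd e u = some d) :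
    (∀ k, u k = UpdComp.decr → e k ≠ 0) ∧ d = updRes e u := by
  by_cases hg : ∀ k, u k = UpdComp.decr → e k ≠ 0
  · rw [upd_eq_some hg] at h
    exact ⟨hg, (Option.some.inj h).symm⟩
  · rw [upd, if_neg hg] at h; cases h

lemma updRes_mono {e e' : Energy} (u : Update) (h : e ≤ e') : updRes e u ≤ updRes e' u := by
  intro k
  simp only [updRes]
  cases u k with
  | decr => exact tsub_le_tsub_right (h k) 1
  | zero => exact h k
  | minWith D => exact Finset.inf_mono_fun (fun b _ => h b)

lemma upd_mono {e e' d : Energy} {u : Update} (hle : e ≤ e') (h : upd e u = some d) :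
    ∃ d', upd e' u = some d' ∧ d ≤ d' := by
  obtain ⟨hg, rfl⟩ := upd_some_elim h
  refine ⟨updRes e' u, upd_eq_some (fun k hk h0 => hg k hk ?_), updRes_mono u hle⟩
  exact le_antisymm (h0 ▸ hle k) zero_le

lemma EGame.Win.mono {Pos : Type} {G : EGame Pos} {g : Pos} {e : Energy}
    (h : G.Win g e) : ∀ e', e ≤ e' → G.Win g e' := by
  induction h with
  | attack hnd hm hu _ ih =>
    intro e' hle
    obtain ⟨d', hu', hd⟩ := upd_mono hle hu
    exact EGame.Win.attack hnd hm hu' (ih d' hd)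
  | defend hdef hne hwin ih =>
    intro e' hle
    refine EGame.Win.defend hdef ?_ ?_
    · intro u g' hm
      obtain ⟨d, hdm⟩ := Option.ne_none_iff_exists'.mp (hne u g' hm)
      obtain ⟨d', hu', _⟩ := upd_mono hle hdm
      simp [hu']
    · intro u g' d' hm hu'
      obtain ⟨d, hdm⟩ := Option.ne_none_iff_exists'.mp (hne u g' hm)
      obtain ⟨d'', hu'', hdd⟩ := upd_mono hle hdm
      rw [hu'] at hu''
      exact ih u g' d hm hdm d' ((Option.some.inj hu'') ▸ hdd)

lemma upd_zeroU (e : Energy) : upd e zeroU = some e :=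
  upd_eq_some (fun k hk => by simp [zeroU] at hk)

lemma upd_decU {e : Energy} {i : Fin 8} (h : e i ≠ 0) :
    upd e (decU i) = some (updRes e (decU i)) := by
  refine upd_eq_some (fun k hk => ?_)
  by_cases hki : k = i
  · subst hki; exact h
  · simp [decU, hki] at hk

lemma updRes_decU (e : Energy) (i : Fin 8) :
    updRes e (decU i) = fun k => if k = i then e k - 1 else e k := by
  funext k; by_cases h : k = i <;> simp [updRes, decU, h]

lemma upd_minU16 (e : Energy) : upd e minU16 = some (updRes e minU16) := by
  refine upd_eq_some (fun k hk => ?_)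
  by_cases h : k = (0 : Fin 8) <;> simp [minU16, h] at hk

lemma updRes_minU16 (e : Energy) :
    updRes e minU16 = fun k => if k = (0 : Fin 8) then e 0 ⊓ e 5 else e k := by
  funext k; by_cases h : k = (0 : Fin 8) <;> simp [updRes, minU16, h]

lemma upd_minU17dec8 {e : Energy} (h : e 7 ≠ 0) :
    upd e minU17dec8 = some (updRes e minU17dec8) := by
  refine upd_eq_some (fun k hk => ?_)
  by_cases h0 : k = (0 : Fin 8)
  · simp [minU17dec8, h0] at hk
  by_cases h7 : k = (7 : Fin 8)
  · subst h7; exact h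
  · simp [minU17dec8, h0, h7] at hk

lemma updRes_minU17dec8 (e : Energy) :
    updRes e minU17dec8 = fun k =>
      if k = (0 : Fin 8) then e 0 ⊓ e 6 else if k = (7 : Fin 8) then e k - 1 else e k := by
  funext k
  by_cases h0 : k = (0 : Fin 8)
  · simp [updRes, minU17dec8, h0]
  by_cases h7 : k = (7 : Fin 8) <;> simp [updRes, minU17dec8, h0, h7]

lemma upd_dec23 {e : Energy} (h1 : e 1 ≠ 0) (h2 : e 2 ≠ 0) :
    upd e dec23 = some (updRes e dec23) := by
  refine upd_eq_some (fun k hk => ?_)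
  by_cases hk1 : k = (1 : Fin 8)
  · subst hk1; exact h1
  by_cases hk2 : k = (2 : Fin 8)
  · subst hk2; exact h2
  · simp [dec23, hk1, hk2] at hk

lemma updRes_dec23 (e : Energy) :
    updRes e dec23 = fun k => if k = (1 : Fin 8) ∨ k = (2 : Fin 8) then e k - 1 else e k := by
  funext k; by_cases h : k = (1 : Fin 8) ∨ k = (2 : Fin 8) <;> simp [updRes, dec23, h]

lemma upd_minU16dec23 {e : Energy} (h1 : e 1 ≠ 0) (h2 : e 2 ≠ 0) :
    upd e minU16dec23 = some (updRes e minU16dec23) := by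
  refine upd_eq_some (fun k hk => ?_)
  by_cases hk0 : k = (0 : Fin 8)
  · simp [minU16dec23, hk0] at hk
  by_cases hk1 : k = (1 : Fin 8)
  · subst hk1; exact h1
  by_cases hk2 : k = (2 : Fin 8)
  · subst hk2; exact h2
  · simp [minU16dec23, hk0, hk1, hk2] at hk

lemma updRes_minU16dec23 (e : Energy) :
    updRes e minU16dec23 = fun k =>
      if k = (0 : Fin 8) then e 0 ⊓ e 5
      else if k = (1 : Fin 8) ∨ k = (2 : Fin 8) then e k - 1 else e k := by
  funext k
  by_cases h0 : k = (0 : Fin 8)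
  · simp [updRes, minU16dec23, h0]
  by_cases h12 : k = (1 : Fin 8) ∨ k = (2 : Fin 8) <;> simp [updRes, minU16dec23, h0, h12]

end AuxEnergy

section AuxGame

variable {Proc Act : Type} (Tr : Proc → Act → Proc → Prop) (τ : Act)

lemma win_defC_empty (p : Proc) (e : Energy) :
    (specGame Tr τ).Win (.defC p (∅ : Set Proc)) e := by
  refine EGame.Win.defend trivial ?_ ?_
  · intro u g' hm
    cases hm with
    | conjAnswer hq => exact absurd hq (Set.notMem_empty _)
  · intro u g' e' hm _
    cases hm with
    | conjAnswer hq => exact absurd hq (Set.notMem_empty _)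

lemma win_att_empty (p : Proc) (e : Energy) :
    (specGame Tr τ).Win (.att p (∅ : Set Proc)) e :=
  EGame.Win.attack (fun hh => hh) GMove.finishing (upd_zeroU e) (win_defC_empty Tr τ p e)

lemma win_defC {p : Proc} {Q : Set Proc} {S : Energy}
    (h : ∀ q ∈ Q, ∃ e', e' ≤ S ∧ (specGame Tr τ).Win (.attC p q) e') :
    (specGame Tr τ).Win (.defC p Q) (unitE 2 + S) := by
  have hS2 : (unitE 2 + S) 2 ≠ 0 := by simp [unitE]
  refine EGame.Win.defend trivial ?_ ?_
  · intro u g' hm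
    cases hm with
    | conjAnswer hq => rw [upd_decU hS2]; simp
  · intro u g' e' hm hu
    cases hm with
    | conjAnswer hq =>
      rw [upd_decU hS2] at hu
      obtain ⟨e0, he0, hw⟩ := h _ hq
      refine hw.mono _ (le_trans he0 ?_)
      rw [← Option.some.inj hu, updRes_decU]
      intro k
      by_cases hk : k = (2 : Fin 8) <;> simp [unitE, hk, one_add_sub_one]

lemma win_defS {p : Proc} {Q : Set Proc} {S : Energy}
    (h : ∀ q ∈ Q, ∃ e', e' ≤ S ∧ (specGame Tr τ).Win (.attC p q) e') :
    (specGame Tr τ).Win (.defS p Q) (unitE 3 + S) := by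
  have hS3 : (unitE 3 + S) 3 ≠ 0 := by simp [unitE]
  refine EGame.Win.defend trivial ?_ ?_
  · intro u g' hm
    cases hm with
    | conjStableAnswer hq => rw [upd_decU hS3]; simp
    | stableFinishing => rw [upd_decU hS3]; simp
  · intro u g' e' hm hu
    cases hm with
    | conjStableAnswer hq =>
      rw [upd_decU hS3] at hu
      obtain ⟨e0, he0, hw⟩ := h _ hq
      refine hw.mono _ (le_trans he0 ?_)
      rw [← Option.some.inj hu, updRes_decU]
      intro k
      by_cases hk : k = (3 : Fin 8) <;> simp [unitE, hk, one_add_sub_one]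
    | stableFinishing => exact win_defC_empty Tr τ p _

lemma win_defB {p p' : Proc} {α : Act} {Qc Qa : Set Proc} {B f : Energy}
    (hB0 : 1 + f 0 ≤ B 0) (hB5 : 1 + f 0 ≤ B 5) (hBf : ∀ k, f k ≤ B k)
    (hconj : ∀ q ∈ Qc, ∃ e', e' ≤ B ∧ (specGame Tr τ).Win (.attC p q) e')
    (hobs : ∀ Q', SetOpt Tr τ Qa α Q' → (specGame Tr τ).Win (.att p' Q') f) :
    (specGame Tr τ).Win (.defB p α p' Qc Qa) ((unitE 1 + unitE 2) + B) := by
  set E : Energy := (unitE 1 + unitE 2) + B with hE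
  have h1 : E 1 ≠ 0 := by simp [hE, unitE]
  have h2 : E 2 ≠ 0 := by simp [hE, unitE]
  refine EGame.Win.defend trivial ?_ ?_
  · intro u g' hm
    cases hm with
    | branchAnswer hq => rw [upd_dec23 h1 h2]; simp
    | branchObservation hQ' => rw [upd_minU16dec23 h1 h2]; simp
  · intro u g' e' hm hu
    cases hm with
    | branchAnswer hq =>
      rw [upd_dec23 h1 h2] at hu
      obtain ⟨e0, he0, hw⟩ := hconj _ hq
      refine hw.mono _ (le_trans he0 ?_)
      rw [← Option.some.inj hu, updRes_dec23]
      intro k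
      by_cases hk : k = (1 : Fin 8) ∨ k = (2 : Fin 8)
      · rcases hk with hk | hk <;> subst hk <;>
          simp [hE, unitE, one_add_sub_one]
      · simp [hE, unitE, hk]
    | branchObservation hQ' =>
      rw [upd_minU16dec23 h1 h2] at hu
      rw [← Option.some.inj hu, updRes_minU16dec23]
      -- attacker at [p', Q']^η, plays branching accounting
      have hr0 : (E 0 ⊓ E 5) ≠ 0 := by
        have hE0 : (1 : ℕ∞) + f 0 ≤ E 0 := by
          simpa [hE, unitE] using hB0
        have hE5 : (1 : ℕ∞) + f 0 ≤ E 5 := by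
          simpa [hE, unitE] using hB5
        have : (1 : ℕ∞) + f 0 ≤ E 0 ⊓ E 5 := le_inf hE0 hE5
        intro h0
        rw [h0] at this
        simp at this
      have hg : (fun k =>
          if k = (0 : Fin 8) then E 0 ⊓ E 5
          else if k = (1 : Fin 8) ∨ k = (2 : Fin 8) then E k - 1 else E k) 0 ≠ 0 := by
        simpa using hr0
      refine EGame.Win.attack (fun hh => hh) GMove.branchAccounting (upd_decU hg)
        (((hobs _ hQ').mono) _ ?_)
      rw [updRes_decU]
      intro k
      by_cases hk0 : k = (0 : Fin 8)
      · subst hk0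
        simp only [if_pos rfl]
        have hE0 : (1 : ℕ∞) + f 0 ≤ E 0 := by simpa [hE, unitE] using hB0
        have hE5 : (1 : ℕ∞) + f 0 ≤ E 5 := by simpa [hE, unitE] using hB5
        calc f 0 = (1 + f 0) - 1 := (one_add_sub_one _).symm
          _ ≤ (E 0 ⊓ E 5) - 1 := tsub_le_tsub_right (le_inf hE0 hE5) 1
      · simp only [if_neg hk0]
        by_cases hk : k = (1 : Fin 8) ∨ k = (2 : Fin 8)
        · rcases hk with hk | hk <;> subst hk <;>
            simp [hE, unitE, one_add_sub_one] <;> exact hBf _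
        · simp only [not_or] at hk
          simp [hE, unitE, hk.1, hk.2]
          exact hBf k

lemma win_attD_of_star {p p' : Proc} {Q : Set Proc} {e : Energy}
    (hp : Star Tr τ p p') (h : (specGame Tr τ).Win (.attD p' Q) e) :
    (specGame Tr τ).Win (.attD p Q) e := by
  induction hp using Relation.ReflTransGen.head_induction_on with
  | refl => exact h
  | @head a c hstep hrest ih =>
    by_cases hac : a = c
    · exact hac ▸ ih
    · exact EGame.Win.attack (fun hh => hh) (GMove.procrastination hstep hac) (upd_zeroU e) ih

end AuxGame

section Main

variable {Proc Act : Type}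

mutual

theorem winF (Tr : Proc → Act → Proc → Prop) (τ : Act) (φ : Formula Act τ)
    (p : Proc) (Q : Set Proc)
    (h1 : Sat Tr τ p φ) (h2 : ∀ q ∈ Q, ¬ Sat Tr τ q φ) :
    (specGame Tr τ).Win (.att p Q) (exprF φ) := by
  cases φ with
  | delayed χ =>
    simp only [Sat] at h1
    obtain ⟨p', hp, hsat⟩ := h1
    simp only [exprF]
    refine EGame.Win.attack (fun hh => hh)
      (GMove.delay (Q' := {q' | ∃ q ∈ Q, Star Tr τ q q'}) rfl) (upd_zeroU _) ?_
    refine win_attD_of_star Tr τ hp (winD Tr τ χ p' _ hsat ?_)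
    rintro x ⟨q, hqQ, hstar⟩ hx
    refine h2 q hqQ ?_
    simp only [Sat]
    exact ⟨x, hstar, hx⟩
  | conj I ps =>
    simp only [Sat] at h1
    simp only [exprF]
    rcases Set.eq_empty_or_nonempty Q with hQ | ⟨q0, hq0⟩
    · subst hQ; exact win_att_empty Tr τ p _
    · have hI : Nonempty I := by
        by_contra hI
        refine h2 q0 hq0 ?_
        simp only [Sat]
        intro i
        exact absurd ⟨i⟩ hI
      rw [iSup_pos hI]
      have hg : ((unitE 4 + unitE 2) + ⨆ i, exprC (ps i)) 4 ≠ 0 := by simp [unitE]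
      refine EGame.Win.attack (fun hh => hh)
        (GMove.immediateConj (Set.nonempty_iff_ne_empty.mp ⟨q0, hq0⟩)) (upd_decU hg)
        ((win_defC Tr τ (S := ⨆ i, exprC (ps i)) ?_).mono _ ?_)
      · intro q hq
        have hnq := h2 q hq
        simp only [Sat] at hnq
        obtain ⟨i, hi⟩ := not_forall.mp hnq
        exact ⟨exprC (ps i), le_iSup (fun i => exprC (ps i)) i, winC Tr τ (ps i) p q (h1 i) hi⟩
      · rw [updRes_decU]
        intro k
        by_cases hk : k = (4 : Fin 8) <;> simp [unitE, hk, one_add_sub_one]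

theorem winD (Tr : Proc → Act → Proc → Prop) (τ : Act) (χ : DFormula Act τ)
    (p : Proc) (Q : Set Proc)
    (h1 : SatD Tr τ p χ) (h2 : ∀ q ∈ Q, ¬ SatD Tr τ q χ) :
    (specGame Tr τ).Win (.attD p Q) (exprE χ) := by
  cases χ with
  | obs a ha φ =>
    simp only [SatD] at h1
    obtain ⟨p'', hstep, hsat⟩ := h1
    have hQ' : ∀ q' ∈ {q' | ∃ q ∈ Q, Tr q a q'}, ¬ Sat Tr τ q' φ := by
      rintro q' ⟨q, hqQ, hq⟩ hsatq
      refine h2 q hqQ ?_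
      simp only [SatD]
      exact ⟨q', hq, hsatq⟩
    have hw := winF Tr τ φ p'' _ hsat hQ'
    simp only [exprE]
    have hg : (unitE 0 + exprF φ) 0 ≠ 0 := by simp [unitE]
    refine EGame.Win.attack (fun hh => hh)
      (GMove.observation hstep ha (Q' := {q' | ∃ q ∈ Q, Tr q a q'}) rfl)
      (upd_decU hg) (hw.mono _ ?_)
    rw [updRes_decU]
    intro k
    by_cases hk : k = (0 : Fin 8) <;> simp [unitE, hk, one_add_sub_one]
  | conj I ps =>
    simp only [SatD] at h1
    simp only [exprE]
    rcases Set.eq_empty_or_nonempty Q with hQ | ⟨q0, hq0⟩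
    · subst hQ
      exact EGame.Win.attack (fun hh => hh) GMove.lateConj (upd_zeroU _)
        (win_defC_empty Tr τ p _)
    · have hI : Nonempty I := by
        by_contra hI
        refine h2 q0 hq0 ?_
        simp only [SatD]
        intro i
        exact absurd ⟨i⟩ hI
      rw [iSup_pos hI]
      refine EGame.Win.attack (fun hh => hh) GMove.lateConj (upd_zeroU _)
        (win_defC Tr τ ?_)
      intro q hq
      have hnq := h2 q hq
      simp only [SatD] at hnq
      obtain ⟨i, hi⟩ := not_forall.mp hnq
      exact ⟨exprC (ps i), le_iSup (fun i => exprC (ps i)) i, winC Tr τ (ps i) p q (h1 i) hi⟩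
  | stableConj I ps =>
    simp only [SatD] at h1
    obtain ⟨hstab, hsat⟩ := h1
    simp only [exprE]
    refine EGame.Win.attack (fun hh => hh) (GMove.stableConj hstab) (upd_zeroU _)
      (win_defS Tr τ ?_)
    rintro q ⟨hqQ, hqs⟩
    have hnq := h2 q hqQ
    simp only [SatD] at hnq
    have hnall : ¬ ∀ i, SatC Tr τ q (ps i) := fun hall => hnq ⟨hqs, hall⟩
    obtain ⟨i, hi⟩ := not_forall.mp hnall
    exact ⟨exprC (ps i), le_iSup (fun i => exprC (ps i)) i, winC Tr τ (ps i) p q (hsat i) hi⟩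
  | branchConj α φa I ps =>
    simp only [SatD] at h1
    obtain ⟨⟨p'', hopt, hsat⟩, hconj⟩ := h1
    simp only [exprE]
    set Qa : Set Proc := {q ∈ Q | ∀ q', OptStep Tr τ q α q' → ¬ Sat Tr τ q' φa} with hQa
    set B : Energy :=
      ((unitE 0 + exprF φa) ⊔ onlyAt 5 (1 + exprF φa 0)) ⊔ ⨆ i, exprC (ps i) with hB
    have hA : unitE 0 + exprF φa ≤ B := le_sup_of_le_left le_sup_left
    have hY : onlyAt 5 (1 + exprF φa 0) ≤ B := le_sup_of_le_left le_sup_right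
    have hS : (⨆ i, exprC (ps i)) ≤ B := le_sup_right
    refine EGame.Win.attack (fun hh => hh)
      (GMove.branchConj (Qa := Qa) hopt (fun q hq => hq.1)) (upd_zeroU _)
      (win_defB Tr τ (f := exprF φa) ?_ ?_ ?_ ?_ ?_)
    · simpa [unitE] using hA 0
    · simpa [onlyAt] using hY 5
    · intro k
      exact le_trans (self_le_add_left _ _) (hA k)
    · rintro q ⟨hqQ, hqn⟩
      have hobs' : ∃ q', OptStep Tr τ q α q' ∧ Sat Tr τ q' φa := by
        by_contra hno
        push_neg at hno
        exact hqn ⟨hqQ, hno⟩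
      have hnq := h2 q hqQ
      simp only [SatD] at hnq
      have hnall : ¬ ∀ i, SatC Tr τ q (ps i) := fun hall => hnq ⟨hobs', hall⟩
      obtain ⟨i, hi⟩ := not_forall.mp hnall
      exact ⟨exprC (ps i), le_trans (le_iSup (fun i => exprC (ps i)) i) hS,
        winC Tr τ (ps i) p q (hconj i) hi⟩
    · rintro Q' rfl
      refine winF Tr τ φa p'' _ hsat ?_
      rintro q' ⟨q, hqQa, hopt'⟩ hsat'
      exact hqQa.2 q' hopt' hsat'

theorem winC (Tr : Proc → Act → Proc → Prop) (τ : Act) (ψ : Conjunct Act τ)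
    (p q : Proc)
    (h1 : SatC Tr τ p ψ) (h2 : ¬ SatC Tr τ q ψ) :
    (specGame Tr τ).Win (.attC p q) (exprC ψ) := by
  cases ψ with
  | pos χ =>
    simp only [SatC] at h1 h2
    obtain ⟨p', hp, hsat⟩ := h1
    have h2' : ∀ x ∈ {q' | ∃ y ∈ ({q} : Set Proc), Star Tr τ y q'}, ¬ SatD Tr τ x χ := by
      rintro x ⟨y, hy, hstar⟩ hx
      rw [Set.mem_singleton_iff] at hy
      subst hy
      exact h2 ⟨x, hstar, hx⟩
    have hw := win_attD_of_star Tr τ hp (winD Tr τ χ p' _ hsat h2')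
    simp only [exprC]
    refine EGame.Win.attack (fun hh => hh)
      (GMove.posConjunct (Q := {q' | ∃ y ∈ ({q} : Set Proc), Star Tr τ y q'}) rfl)
      (upd_minU16 _) (hw.mono _ ?_)
    rw [updRes_minU16]
    intro k
    by_cases hk : k = (0 : Fin 8) <;> simp [unitE, onlyAt, hk]
  | neg χ =>
    simp only [SatC] at h1 h2
    rw [not_not] at h2
    obtain ⟨q', hq, hsat⟩ := h2
    have hpq : p ≠ q := by
      rintro rfl
      exact h1 ⟨q', hq, hsat⟩
    have h2' : ∀ x ∈ {q' | ∃ y ∈ ({p} : Set Proc), Star Tr τ y q'}, ¬ SatD Tr τ x χ := by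
      rintro x ⟨y, hy, hstar⟩ hx
      rw [Set.mem_singleton_iff] at hy
      subst hy
      exact h1 ⟨x, hstar, hx⟩
    have hw := win_attD_of_star Tr τ hq (winD Tr τ χ q' _ hsat h2')
    simp only [exprC]
    have hg : ((unitE 7 + exprE χ) ⊔ onlyAt 6 (exprE χ 0)) 7 ≠ 0 := by
      simp [unitE, onlyAt]
    refine EGame.Win.attack (fun hh => hh)
      (GMove.negConjunct (Q := {q' | ∃ y ∈ ({p} : Set Proc), Star Tr τ y q'}) rfl hpq)
      (upd_minU17dec8 hg) (hw.mono _ ?_)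
    rw [updRes_minU17dec8]
    intro k
    by_cases hk0 : k = (0 : Fin 8)
    · simp [unitE, onlyAt, hk0]
    by_cases hk7 : k = (7 : Fin 8) <;>
      simp [unitE, onlyAt, hk0, hk7, one_add_sub_one]

end

end Main


/-- if `φ` distinguishes `p` from `Q`, then `expr(φ)` is an
attacker winning budget at `[p,Q]_a`. -/
theorem distinction_price_in_win {Proc Act : Type} (Tr : Proc → Act → Proc → Prop)
    (τ : Act) (φ : Formula Act τ) (p : Proc) (Q : Set Proc)
    (h : Distinguishes Tr τ φ p Q) :
    (specGame Tr τ).Win (.att p Q) (exprF φ) := by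
  exact winF Tr τ φ p Q h.1 h.2

end Spectroscopy
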